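/- Let ω ∈ (0,∞], r ≥ 2, m ∈ ℕ, and let e : [0,ω) → ℝ^m be (r−1)-times continuously differentiable. Given k_1,…,k_{r−1} > 0, define recursively e_1 := e and e_{i+1} := ė_i + k_i e_i for i = 1,…,r−1. Let φ_1,…,φ_r ∈ Φ be such that the quantities M_i := sup_{t≥0} |φ̇_i(t)/φ_i(t)| and N_i := sup_{t≥0} φ_i(t)/φ_{i+1}(t) are finite, and assume (K1): k_i > M_i + N_i for i = 1,…,r−1 and (K2): φ_i(0)‖e_i(0)‖ < 1 for i = 1,…,r. If φ_r(t)‖e_r(t)‖ < 1 for all t ∈ [0,ω), then for every i = 1,…,r−1 and all t ∈ [0,ω): φ_i(t)‖e_i(t)‖ ≤ ε_i, where ε_i := max{ φ_i(0)‖e_i(0)‖, (M_i + N_i)/k_i } and ε_i < 1. -/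

import Mathlib

open Set Filter

set_option maxHeartbeats 1000000

noncomputable section

/-- Euclidean space `ℝ^m`. -/
abbrev Euc (m : ℕ) := EuclideanSpace ℝ (Fin m)

/-- Membership in the funnel class `Φ`: `φ` is continuously differentiable on `[0,∞)` with
derivative `φ'`, both `φ` and `φ'` are bounded there, `φ(t) > 0` for `t > 0`, and
`liminf_{t→∞} φ(t) > 0`. -/
def FunnelFun (φ φ' : ℝ → ℝ) : Prop :=
  (∀ t ∈ Ici (0 : ℝ), HasDerivWithinAt φ (φ' t) (Ici 0) t) ∧
  ContinuousOn φ' (Ici 0) ∧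
  (∃ M, ∀ t ∈ Ici (0 : ℝ), |φ t| ≤ M) ∧
  (∃ M, ∀ t ∈ Ici (0 : ℝ), |φ' t| ≤ M) ∧
  (∀ t : ℝ, 0 < t → 0 < φ t) ∧
  0 < Filter.liminf φ Filter.atTop

lemma funnel_step {m : ℕ} (ω : EReal) (D : Set ℝ)
    (hD : D = {t : ℝ | 0 ≤ t ∧ (t : EReal) < ω})
    (k M N : ℝ) (hk : 0 < k) (hM0 : 0 ≤ M) (hN0 : 0 ≤ N) (hMN : M + N < k)
    (e f : ℝ → Euc m) (φ φ' : ℝ → ℝ)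
    (hder : ∀ t ∈ D, HasDerivWithinAt e (f t - k • e t) D t)
    (hφder : ∀ t ∈ Ici (0:ℝ), HasDerivWithinAt φ (φ' t) (Ici 0) t)
    (hφpos : ∀ t : ℝ, 0 < t → 0 < φ t)
    (hMub : ∀ t ∈ Ici (0:ℝ), |φ' t / φ t| ≤ M)
    (hNub : ∀ t ∈ D, 0 < t → φ t * ‖f t‖ ≤ N) :
    ∀ t ∈ D, φ t * ‖e t‖ ≤ max (φ 0 * ‖e 0‖) ((M + N) / k) := by
  set ε := max (φ 0 * ‖e 0‖) ((M + N) / k) with hε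
  have hsub : D ⊆ Ici (0:ℝ) := by rw [hD]; intro x hx; exact hx.1
  have hφ0 : 0 ≤ φ 0 := by
    have hc : ContinuousWithinAt φ (Ioi 0) 0 :=
      ((hφder 0 self_mem_Ici).continuousWithinAt).mono Ioi_subset_Ici_self
    exact ge_of_tendsto hc (eventually_mem_nhdsWithin.mono fun x hx => (hφpos x hx).le)
  have hφnn : ∀ t ∈ D, 0 ≤ φ t := by
    intro t ht
    rcases eq_or_lt_of_le (mem_Ici.1 (hsub ht)) with h | h
    · rw [← h]; exact hφ0
    · exact (hφpos t h).le
  have hεnn : 0 ≤ ε := le_max_of_le_right (div_nonneg (by linarith) hk.le)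
  set v : ℝ → ℝ := fun t => φ t * ‖e t‖ with hv
  have hvnn : ∀ t ∈ D, 0 ≤ v t := fun t ht => mul_nonneg (hφnn t ht) (norm_nonneg _)
  have contφ : ContinuousOn φ (Ici 0) := fun t ht => (hφder t ht).continuousWithinAt
  have contE : ContinuousOn e D := fun t ht => (hder t ht).continuousWithinAt
  have contv : ContinuousOn v D := ((contφ.mono hsub).mul contE.norm)
  intro t₁ ht₁
  by_contra hcon
  push_neg at hcon
  have ht₁0 : 0 < t₁ := by
    rcases eq_or_lt_of_le (mem_Ici.1 (hsub ht₁)) with h | h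
    · exfalso; rw [← h] at hcon; exact absurd (le_max_left _ _) (not_le.2 hcon)
    · exact h
  have hIccD : Icc 0 t₁ ⊆ D := by
    rw [hD] at ht₁ ⊢
    intro x hx
    exact ⟨hx.1, lt_of_le_of_lt (EReal.coe_le_coe_iff.2 hx.2) ht₁.2⟩
  -- the set where v ≤ ε up to time t₁
  set S : Set ℝ := Icc 0 t₁ ∩ v ⁻¹' (Iic ε) with hS
  have hSclosed : IsClosed S :=
    (contv.mono hIccD).preimage_isClosed_of_isClosed isClosed_Icc isClosed_Iic
  have h0S : (0:ℝ) ∈ S := ⟨⟨le_rfl, ht₁0.le⟩, mem_preimage.2 (mem_Iic.2 (le_max_left _ _))⟩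
  have hSbdd : BddAbove S := (bddAbove_Icc).mono inter_subset_left
  set s := sSup S with hs
  have hsS : s ∈ S := hSclosed.csSup_mem ⟨0, h0S⟩ hSbdd
  have hs0 : 0 ≤ s := hsS.1.1
  have hst₁ : s < t₁ := by
    rcases eq_or_lt_of_le hsS.1.2 with h | h
    · exfalso; have := hsS.2; rw [h] at this; exact absurd this (not_le.2 hcon)
    · exact h
  have hgt : ∀ t, s < t → t ≤ t₁ → ε < v t := by
    intro t hst htt
    by_contra hle
    push_neg at hle
    have : t ∈ S := ⟨⟨le_trans hs0 hst.le, htt⟩, hle⟩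
    exact absurd (le_csSup hSbdd this) (not_le.2 hst)
  -- the squared weighted error
  set u : ℝ → Euc m := fun t => φ t • e t with hu
  set W : ℝ → ℝ := fun t => (inner ℝ (u t) (u t) : ℝ) with hW
  have hIccs : Icc s t₁ ⊆ D := fun x hx => hIccD ⟨le_trans hs0 hx.1, hx.2⟩
  have contu : ContinuousOn u D := (contφ.mono hsub).smul contE
  have contW : ContinuousOn W (Icc s t₁) :=
    ((contu.mono hIccs).inner (contu.mono hIccs))
  -- derivative of W at interior points
  have hderivW : ∀ x ∈ Ioo s t₁,
      HasDerivAt W (2 * (inner ℝ (u x) (φ x • (f x - k • e x) + φ' x • e x) : ℝ)) x := by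
    intro x hx
    have hx0 : 0 < x := lt_of_le_of_lt hs0 hx.1
    have hxD : x ∈ D := hIccs ⟨hx.1.le, hx.2.le⟩
    have hDnhds : D ∈ nhds x := by
      refine mem_nhds_iff.2 ⟨Ioo 0 t₁, ?_, isOpen_Ioo, ⟨hx0, hx.2⟩⟩
      intro y hy
      rw [hD]
      rw [hD] at ht₁
      exact ⟨hy.1.le, lt_trans (EReal.coe_lt_coe_iff.2 hy.2) ht₁.2⟩
    have he : HasDerivAt e (f x - k • e x) x := (hder x hxD).hasDerivAt hDnhds
    have hφx : HasDerivAt φ (φ' x) x :=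
      (hφder x (mem_Ici.2 hx0.le)).hasDerivAt (Ici_mem_nhds hx0)
    have huder : HasDerivAt u (φ x • (f x - k • e x) + φ' x • e x) x := hφx.smul he
    have := (huder.inner ℝ huder)
    refine this.congr_deriv ?_
    rw [real_inner_comm (φ x • (f x - k • e x) + φ' x • e x) (u x)]
    ring
  have hderivnonpos : ∀ x ∈ Ioo s t₁,
      (2 * (inner ℝ (u x) (φ x • (f x - k • e x) + φ' x • e x) : ℝ)) ≤ 0 := by
    intro x hx
    have hx0 : 0 < x := lt_of_le_of_lt hs0 hx.1
    have hxD : x ∈ D := hIccs ⟨hx.1.le, hx.2.le⟩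
    have hφx : 0 < φ x := hφpos x hx0
    set a := φ x; set a' := φ' x; set A := ‖e x‖; set B := ‖f x‖
    have hA : 0 ≤ A := norm_nonneg _
    have hB : 0 ≤ B := norm_nonneg _
    have hvε : ε < a * A := hgt x hx.1 hx.2.le
    have hvMN : (M + N) / k ≤ a * A := le_trans (le_max_right _ _) hvε.le
    have hkv : M + N ≤ k * (a * A) := by
      rw [div_le_iff₀ hk] at hvMN; linarith [hvMN]
    have haA : 0 ≤ a * A := mul_nonneg hφx.le hA
    -- N ≤ (k - M) * (a*A)
    have h6 : N ≤ (k - M) * (a * A) := by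
      nlinarith [mul_nonneg hM0 (by linarith : (0:ℝ) ≤ k - M - N),
        mul_nonneg (by linarith : (0:ℝ) ≤ k - M) (by linarith : (0:ℝ) ≤ k * (a*A) - M - N)]
    have ha' : a' ≤ M * a := by
      have := hMub x hx0.le
      rw [abs_div, abs_of_pos hφx] at this
      rw [div_le_iff₀ hφx] at this
      calc a' ≤ |a'| := le_abs_self _
        _ ≤ M * a := this
    have haB : a * B ≤ N := hNub x hxD hx0
    have hinner : (inner ℝ (e x) (f x) : ℝ) ≤ A * B := real_inner_le_norm _ _
    have hself : (inner ℝ (e x) (e x) : ℝ) = A ^ 2 := real_inner_self_eq_norm_sq _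
    have hexpand : (inner ℝ (u x) (φ x • (f x - k • e x) + φ' x • e x) : ℝ)
        = a ^ 2 * (inner ℝ (e x) (f x) : ℝ) - k * a ^ 2 * A ^ 2 + a * a' * A ^ 2 := by
      simp only [hu, inner_add_right, inner_sub_right, real_inner_smul_left,
        real_inner_smul_right, hself]
      ring
    rw [hexpand]
    have hstep1 : a ^ 2 * (inner ℝ (e x) (f x) : ℝ) ≤ (a * A) * (a * B) := by
      have := mul_le_mul_of_nonneg_left hinner (sq_nonneg a)
      nlinarith [this]
    have hstep2 : (a * A) * (a * B) ≤ (a * A) * N := mul_le_mul_of_nonneg_left haB haA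
    have hstep3 : (a * A) * N ≤ (a * A) * ((k - M) * (a * A)) :=
      mul_le_mul_of_nonneg_left h6 haA
    have hstep4 : a * a' * A ^ 2 ≤ M * a ^ 2 * A ^ 2 := by
      have := mul_le_mul_of_nonneg_right (mul_le_mul_of_nonneg_left ha' hφx.le) (sq_nonneg A)
      nlinarith [this]
    nlinarith [hstep1, hstep2, hstep3, hstep4]

  -- antitone
  have hanti : AntitoneOn W (Icc s t₁) := by
    apply antitoneOn_of_deriv_nonpos (convex_Icc s t₁) contW
    · intro x hx
      rw [interior_Icc] at hx
      exact ((hderivW x hx).differentiableAt).differentiableWithinAt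
    · intro x hx
      rw [interior_Icc] at hx
      rw [(hderivW x hx).deriv]
      exact hderivnonpos x hx
  have hWv : ∀ t ∈ D, W t = v t ^ 2 := by
    intro t ht
    simp only [hW, hu, hv, real_inner_self_eq_norm_sq, norm_smul, Real.norm_eq_abs,
      abs_of_nonneg (hφnn t ht)]
  have hWle : W t₁ ≤ W s :=
    hanti ⟨le_rfl, hst₁.le⟩ ⟨hst₁.le, le_rfl⟩ hst₁.le
  rw [hWv t₁ ht₁, hWv s (hIccs ⟨le_rfl, hst₁.le⟩)] at hWle
  have hvs : v s ≤ ε := hsS.2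
  have h1 : v s < v t₁ := lt_of_le_of_lt hvs hcon
  have h2 : v s * v s < v t₁ * v t₁ :=
    mul_self_lt_mul_self (hvnn s (hIccs ⟨le_rfl, hst₁.le⟩)) h1
  nlinarith [hWle, h2]

/-- **Funnel estimates for the auxiliary error signals (Lemma `lem:epsi`).**
If the last auxiliary error `e_r` evolves in its funnel, then under (K1) and (K2) each
`e_i`, `i = 1,…,r−1`, satisfies `φ_i(t) ‖e_i(t)‖ ≤ ε_i < 1` on `[0,ω)`, with
`ε_i = max{ φ_i(0)‖e_i(0)‖, (M_i+N_i)/k_i }`. -/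
theorem stmt_8 (m r : ℕ) (hr : 2 ≤ r) (ω : EReal) (hω : 0 < ω)
    (D : Set ℝ) (hD : D = {t : ℝ | 0 ≤ t ∧ (t : EReal) < ω})
    (k : ℕ → ℝ) (hk : ∀ i, 1 ≤ i → i ≤ r - 1 → 0 < k i)
    -- the auxiliary error signals: `esig 1 = e` and `e_{i+1} = ė_i + k_i e_i` on `[0,ω)`
    (esig : ℕ → ℝ → Euc m)
    (hesig : ∀ i, 1 ≤ i → i ≤ r - 1 → ∀ t ∈ D,
      HasDerivWithinAt (esig i) (esig (i + 1) t - k i • esig i t) D t)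
    (φ φ' : ℕ → ℝ → ℝ)
    (hΦ : ∀ i, 1 ≤ i → i ≤ r → FunnelFun (φ i) (φ' i))
    (M N : ℕ → ℝ)
    (hM : ∀ i, 1 ≤ i → i ≤ r - 1 →
      IsLUB {x : ℝ | ∃ t ∈ Ici (0 : ℝ), x = |φ' i t / φ i t|} (M i))
    (hN : ∀ i, 1 ≤ i → i ≤ r - 1 →
      IsLUB {x : ℝ | ∃ t ∈ Ici (0 : ℝ), x = φ i t / φ (i + 1) t} (N i))
    (hK1 : ∀ i, 1 ≤ i → i ≤ r - 1 → M i + N i < k i)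
    (hK2 : ∀ i, 1 ≤ i → i ≤ r → φ i 0 * ‖esig i 0‖ < 1)
    (hfunnel : ∀ t ∈ D, φ r t * ‖esig r t‖ < 1) :
    ∀ i, 1 ≤ i → i ≤ r - 1 →
      (∀ t ∈ D, φ i t * ‖esig i t‖ ≤ max (φ i 0 * ‖esig i 0‖) ((M i + N i) / k i)) ∧
      max (φ i 0 * ‖esig i 0‖) ((M i + N i) / k i) < 1 := by
  have hsubIci : D ⊆ Ici (0:ℝ) := by rw [hD]; intro x hx; exact hx.1
  have hmain : ∀ i, 1 ≤ i → i ≤ r - 1 →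
      (∀ t ∈ D, 0 < t → φ (i+1) t * ‖esig (i+1) t‖ ≤ 1) →
      (∀ t ∈ D, φ i t * ‖esig i t‖ ≤ max (φ i 0 * ‖esig i 0‖) ((M i + N i) / k i)) ∧
      max (φ i 0 * ‖esig i 0‖) ((M i + N i) / k i) < 1 := by
    intro i h1 h2 hbnd
    obtain ⟨hφd, _, _, _, hφpos, _⟩ := hΦ i h1 (le_trans h2 (Nat.sub_le r 1))
    obtain ⟨hψd, _, _, _, hψpos, _⟩ := hΦ (i+1) (by omega) (by omega)
    have hki := hk i h1 h2
    have hMub : ∀ t ∈ Ici (0:ℝ), |φ' i t / φ i t| ≤ M i :=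
      fun t ht => (hM i h1 h2).1 ⟨t, ht, rfl⟩
    have hM0 : 0 ≤ M i := le_trans (abs_nonneg _) (hMub 0 self_mem_Ici)
    have hNub' : ∀ t ∈ Ici (0:ℝ), φ i t / φ (i+1) t ≤ N i :=
      fun t ht => (hN i h1 h2).1 ⟨t, ht, rfl⟩
    have hN0 : 0 ≤ N i :=
      le_trans (div_nonneg (hφpos 1 one_pos).le (hψpos 1 one_pos).le)
        (hNub' 1 (by norm_num))
    have hNub : ∀ t ∈ D, 0 < t → φ i t * ‖esig (i+1) t‖ ≤ N i := by
      intro t ht ht0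
      have hψt : 0 < φ (i+1) t := hψpos t ht0
      have hb1 : φ (i+1) t * ‖esig (i+1) t‖ ≤ 1 := hbnd t ht ht0
      have heq : φ i t * ‖esig (i+1) t‖
          = (φ i t / φ (i+1) t) * (φ (i+1) t * ‖esig (i+1) t‖) := by
        field_simp
      rw [heq]
      calc (φ i t / φ (i+1) t) * (φ (i+1) t * ‖esig (i+1) t‖)
          ≤ N i * 1 := mul_le_mul (hNub' t (hsubIci ht)) hb1
            (mul_nonneg hψt.le (norm_nonneg _)) hN0
        _ = N i := mul_one _
    refine ⟨?_, ?_⟩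
    · exact funnel_step ω D hD (k i) (M i) (N i) hki hM0 hN0 (hK1 i h1 h2)
        (esig i) (esig (i+1)) (φ i) (φ' i) (hesig i h1 h2) hφd hφpos hMub hNub
    · refine max_lt (hK2 i h1 (le_trans h2 (Nat.sub_le r 1))) ?_
      rw [div_lt_one hki]
      exact hK1 i h1 h2
  have key : ∀ d : ℕ, ∀ i, 1 ≤ i → i + d = r - 1 →
      (∀ t ∈ D, φ i t * ‖esig i t‖ ≤ max (φ i 0 * ‖esig i 0‖) ((M i + N i) / k i)) ∧
      max (φ i 0 * ‖esig i 0‖) ((M i + N i) / k i) < 1 := by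
    intro d
    induction d with
    | zero =>
      intro i h1 h2
      refine hmain i h1 (by omega) ?_
      intro t ht _
      have hir : i + 1 = r := by omega
      rw [hir]
      exact (hfunnel t ht).le
    | succ d ih =>
      intro i h1 h2
      refine hmain i h1 (by omega) ?_
      intro t ht _
      have hc := ih (i+1) (by omega) (by omega)
      exact le_trans (hc.1 t ht) hc.2.le
  intro i h1 h2
  exact key (r - 1 - i) i h1 (by omega)
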